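/- For an irrational x₀ ∈ (0,1), for all n ≥ 1: θₙ₊₁ = θₙ₋₁ + ⌊(1 + √(1 − 4θₙ₋₁θₙ))/(2θₙ)⌋ · √(1 − 4θₙ₋₁θₙ) − ⌊(1 + √(1 − 4θₙ₋₁θₙ))/(2θₙ)⌋² · θₙ; i.e., θₙ₊₁ is determined explicitly by (θₙ₋₁, θₙ). -/

import Mathlib

noncomputable section

open Real

/-- The Gauss map `T x = 1/x - ⌊1/x⌋`. -/
def gauss (x : ℝ) : ℝ := 1 / x - ⌊1 / x⌋

/-- The future of `x₀` at time `n`: `xₙ = Tⁿ x₀`. -/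
def fut (x₀ : ℝ) (n : ℕ) : ℝ := gauss^[n] x₀

/-- The `n`-th partial quotient (digit) of `x₀` (meaningful for `n ≥ 1`):
`aₙ = ⌊1/xₙ₋₁⌋`. -/
def digit (x₀ : ℝ) (n : ℕ) : ℤ := ⌊1 / fut x₀ (n - 1)⌋

/-- Numerators of the continued fraction convergents of `x₀ ∈ (0,1)`. -/
def num (x₀ : ℝ) : ℕ → ℤ
  | 0 => 0
  | 1 => 1
  | (n + 2) => digit x₀ (n + 2) * num x₀ (n + 1) + num x₀ n

/-- Denominators of the continued fraction convergents of `x₀ ∈ (0,1)`. -/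
def den (x₀ : ℝ) : ℕ → ℤ
  | 0 => 1
  | 1 => digit x₀ 1
  | (n + 2) => digit x₀ (n + 2) * den x₀ (n + 1) + den x₀ n

/-- The `n`-th approximation coefficient `θₙ = qₙ² |x₀ - pₙ/qₙ|`. -/
def theta (x₀ : ℝ) (n : ℕ) : ℝ :=
  (den x₀ n : ℝ) ^ 2 * |x₀ - (num x₀ n : ℝ) / (den x₀ n : ℝ)|

/-- Finite continued fraction `[b₁,...,bₖ] = 1/(b₁ + 1/(⋯ + 1/bₖ))`, with `[∅] = 0`. -/
def fcf : List ℝ → ℝ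
  | [] => 0
  | (b :: bs) => 1 / (b + fcf bs)

/-- The past of `x₀` at time `n ≥ 1`: `yₙ = -aₙ - [aₙ₋₁, aₙ₋₂, ..., a₁]`. -/
def past (x₀ : ℝ) (n : ℕ) : ℝ :=
  -(digit x₀ n : ℝ) -
    fcf (((List.range (n - 1)).map fun i => ((digit x₀ (n - 1 - i) : ℤ) : ℝ)))

/-- The domain `Ω = (0,1) × (-∞,-1)`. -/
def Omega : Set (ℝ × ℝ) := Set.Ioo (0 : ℝ) 1 ×ˢ Set.Iio (-1 : ℝ)

/-- The open triangle `Γ` with vertices `(0,0)`, `(1,0)`, `(0,1)`. -/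
def Gam : Set (ℝ × ℝ) := {p | 0 < p.1 ∧ 0 < p.2 ∧ p.1 + p.2 < 1}

/-- The map `Ψ(x,y) = (1/(x-y), -xy/(x-y))`. -/
def Psi (p : ℝ × ℝ) : ℝ × ℝ := (1 / (p.1 - p.2), -(p.1 * p.2) / (p.1 - p.2))

/-- The map `Φ(u,v) = ((1-√(1-4uv))/(2u), -(1+√(1-4uv))/(2u))`. -/
def Phi (p : ℝ × ℝ) : ℝ × ℝ :=
  ((1 - Real.sqrt (1 - 4 * p.1 * p.2)) / (2 * p.1),
   -((1 + Real.sqrt (1 - 4 * p.1 * p.2)) / (2 * p.1)))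

/-- The natural extension map `𝒯(x,y) = (1/x - ⌊1/x⌋, 1/y - ⌊1/x⌋)`. -/
def natExt (p : ℝ × ℝ) : ℝ × ℝ := (1 / p.1 - ⌊1 / p.1⌋, 1 / p.2 - ⌊1 / p.1⌋)

namespace Stmt17Aux

variable (x₀ : ℝ)

/-- product of futures -/
def B (n : ℕ) : ℝ := ∏ k ∈ Finset.range (n + 1), fut x₀ k


lemma fut_mem (hx : x₀ ∈ Set.Ioo (0:ℝ) 1) (hirr : Irrational x₀) (n : ℕ) : fut x₀ n ∈ Set.Ioo (0:ℝ) 1 ∧ Irrational (fut x₀ n) := by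
  induction n with
  | zero => exact ⟨hx, hirr⟩
  | succ n ih =>
    obtain ⟨⟨h0, h1⟩, hir⟩ := ih
    have hne : fut x₀ n ≠ 0 := ne_of_gt h0
    have hinv : Irrational (fut x₀ n)⁻¹ := hir.inv
    have hinv' : Irrational (1 / fut x₀ n) := by rwa [one_div]
    have hgi : Irrational (gauss (fut x₀ n)) := hinv'.sub_intCast _
    have heq : fut x₀ (n+1) = gauss (fut x₀ n) := by
      simp [fut, Function.iterate_succ_apply']
    rw [heq]
    refine ⟨⟨?_, ?_⟩, hgi⟩
    · have hne0 : gauss (fut x₀ n) ≠ 0 := fun h => hgi.ne_int 0 (by exact_mod_cast h)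
      have hnn : 0 ≤ gauss (fut x₀ n) := sub_nonneg.2 (Int.floor_le (1 / fut x₀ n))
      exact lt_of_le_of_ne hnn (Ne.symm hne0)
    · have := Int.sub_one_lt_floor (1 / fut x₀ n)
      unfold gauss; linarith

lemma fut_pos (hx : x₀ ∈ Set.Ioo (0:ℝ) 1) (hirr : Irrational x₀) (n : ℕ) : 0 < fut x₀ n := (fut_mem x₀ hx hirr n).1.1
lemma fut_lt_one (hx : x₀ ∈ Set.Ioo (0:ℝ) 1) (hirr : Irrational x₀) (n : ℕ) : fut x₀ n < 1 := (fut_mem x₀ hx hirr n).1.2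

lemma digit_ge_one (hx : x₀ ∈ Set.Ioo (0:ℝ) 1) (hirr : Irrational x₀) (n : ℕ) : 1 ≤ digit x₀ (n + 1) := by
  have h0 := fut_pos x₀ hx hirr n
  have h1 := fut_lt_one x₀ hx hirr n
  have : (1:ℝ) ≤ 1 / fut x₀ n := by
    rw [le_div_iff₀ h0]; linarith
  have : ((1:ℤ):ℝ) ≤ 1 / fut x₀ (n + 1 - 1) := by simpa using this
  exact Int.le_floor.2 this

lemma B_pos (hx : x₀ ∈ Set.Ioo (0:ℝ) 1) (hirr : Irrational x₀) (n : ℕ) : 0 < B x₀ n :=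
  Finset.prod_pos fun k _ => fut_pos x₀ hx hirr k

lemma B_succ (n : ℕ) : B x₀ (n + 1) = B x₀ n * fut x₀ (n + 1) :=
  Finset.prod_range_succ _ _

lemma B_lt (hx : x₀ ∈ Set.Ioo (0:ℝ) 1) (hirr : Irrational x₀) (n : ℕ) : B x₀ (n + 1) < B x₀ n := by
  rw [B_succ]
  have := B_pos x₀ hx hirr n
  nlinarith [fut_lt_one x₀ hx hirr (n+1), fut_pos x₀ hx hirr (n+1)]

lemma B_rec (hx : x₀ ∈ Set.Ioo (0:ℝ) 1) (hirr : Irrational x₀) (n : ℕ) :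
    B x₀ (n + 2) = B x₀ n - (digit x₀ (n + 2) : ℝ) * B x₀ (n + 1) := by
  have hgauss : fut x₀ (n + 2) = 1 / fut x₀ (n + 1) - (digit x₀ (n + 2) : ℝ) := by
    have : fut x₀ (n+2) = gauss (fut x₀ (n+1)) := by
      simp [fut, Function.iterate_succ_apply']
    rw [this]; rfl
  have hne : fut x₀ (n + 1) ≠ 0 := ne_of_gt (fut_pos x₀ hx hirr (n+1))
  rw [B_succ, B_succ, hgauss]
  field_simp

/-- εₙ = qₙ x₀ − pₙ = (−1)ⁿ Bₙ -/
lemma eps (hx : x₀ ∈ Set.Ioo (0:ℝ) 1) (hirr : Irrational x₀) (n : ℕ) :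
    (den x₀ n : ℝ) * x₀ - (num x₀ n : ℝ) = (-1) ^ n * B x₀ n := by
  have hx0 : x₀ ≠ 0 := ne_of_gt hx.1
  have key : ∀ m : ℕ,
      ((den x₀ m : ℝ) * x₀ - (num x₀ m : ℝ) = (-1) ^ m * B x₀ m) ∧
      ((den x₀ (m+1) : ℝ) * x₀ - (num x₀ (m+1) : ℝ) = (-1) ^ (m+1) * B x₀ (m+1)) := by
    intro m
    induction m with
    | zero =>
      constructor
      · simp [den, num, B, fut]
      · have hB1 : B x₀ 1 = x₀ * fut x₀ 1 := by
          simpa [B, fut] using Finset.prod_range_succ (fut x₀) 1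
        have hgauss : fut x₀ 1 = 1 / x₀ - (digit x₀ 1 : ℝ) := by
          have : fut x₀ 1 = gauss (fut x₀ 0) := by
            simp [fut, Function.iterate_succ_apply']
          rw [this]; rfl
        simp only [den, num, hB1, hgauss]
        field_simp
        ring
    | succ m ih =>
      refine ⟨ih.2, ?_⟩
      have hd : (den x₀ (m+2) : ℝ) = (digit x₀ (m+2) : ℝ) * (den x₀ (m+1) : ℝ) + (den x₀ m : ℝ) := by
        rw [show den x₀ (m+2) = digit x₀ (m+2) * den x₀ (m+1) + den x₀ m from rfl]; push_cast; ring
      have hp : (num x₀ (m+2) : ℝ) = (digit x₀ (m+2) : ℝ) * (num x₀ (m+1) : ℝ) + (num x₀ m : ℝ) := by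
        rw [show num x₀ (m+2) = digit x₀ (m+2) * num x₀ (m+1) + num x₀ m from rfl]; push_cast; ring
      rw [hd, hp, B_rec x₀ hx hirr m]
      linear_combination ((digit x₀ (m+2)) : ℝ) * ih.2 + ih.1
  exact (key n).1

lemma det (hx : x₀ ∈ Set.Ioo (0:ℝ) 1) (hirr : Irrational x₀) (n : ℕ) :
    num x₀ (n+1) * den x₀ n - num x₀ n * den x₀ (n+1) = (-1) ^ n := by
  induction n with
  | zero => simp [num, den]
  | succ n ih =>
    have hd : den x₀ (n+2) = digit x₀ (n+2) * den x₀ (n+1) + den x₀ n := rfl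
    have hp : num x₀ (n+2) = digit x₀ (n+2) * num x₀ (n+1) + num x₀ n := rfl
    rw [hd, hp, pow_succ]
    linarith [ih]

lemma den_ge_one (hx : x₀ ∈ Set.Ioo (0:ℝ) 1) (hirr : Irrational x₀) (n : ℕ) : 1 ≤ den x₀ n := by
  have key : ∀ m : ℕ, 1 ≤ den x₀ m ∧ 1 ≤ den x₀ (m+1) := by
    intro m
    induction m with
    | zero => exact ⟨le_refl 1, digit_ge_one x₀ hx hirr 0⟩
    | succ m ih =>
      refine ⟨ih.2, ?_⟩
      have ha := digit_ge_one x₀ hx hirr (m+1)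
      have hd : den x₀ (m+2) = digit x₀ (m+2) * den x₀ (m+1) + den x₀ m := rfl
      nlinarith [ih.1, ih.2]
  exact (key n).1

lemma den_mono (hx : x₀ ∈ Set.Ioo (0:ℝ) 1) (hirr : Irrational x₀) (n : ℕ) : den x₀ n ≤ den x₀ (n+1) := by
  cases n with
  | zero => exact digit_ge_one x₀ hx hirr 0
  | succ n =>
    have ha := digit_ge_one x₀ hx hirr (n+1)
    have hd : den x₀ (n+2) = digit x₀ (n+2) * den x₀ (n+1) + den x₀ n := rfl
    nlinarith [den_ge_one x₀ hx hirr n, den_ge_one x₀ hx hirr (n+1)]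

lemma theta_eq (hx : x₀ ∈ Set.Ioo (0:ℝ) 1) (hirr : Irrational x₀) (n : ℕ) : theta x₀ n = (den x₀ n : ℝ) * B x₀ n := by
  have hq : (0:ℝ) < (den x₀ n : ℝ) := by exact_mod_cast den_ge_one x₀ hx hirr n
  have hqne : (den x₀ n : ℝ) ≠ 0 := ne_of_gt hq
  have h : x₀ - (num x₀ n : ℝ) / (den x₀ n : ℝ) =
      ((den x₀ n : ℝ) * x₀ - (num x₀ n : ℝ)) / (den x₀ n : ℝ) := by
    field_simp
  rw [theta, h, eps x₀ hx hirr n, abs_div, abs_mul, abs_pow, abs_neg, abs_one, one_pow, one_mul,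
    abs_of_pos (B_pos x₀ hx hirr n), abs_of_pos hq]
  field_simp

lemma one_eq (hx : x₀ ∈ Set.Ioo (0:ℝ) 1) (hirr : Irrational x₀) (n : ℕ) :
    (den x₀ (n+1) : ℝ) * B x₀ n + (den x₀ n : ℝ) * B x₀ (n+1) = 1 := by
  have h1 := eps x₀ hx hirr n
  have h2 := eps x₀ hx hirr (n+1)
  have hdet : ((num x₀ (n+1) : ℝ) * (den x₀ n : ℝ) - (num x₀ n : ℝ) * (den x₀ (n+1) : ℝ)) = (-1)^n := by
    exact_mod_cast congrArg (Int.cast : ℤ → ℝ) (det x₀ hx hirr n)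
  have key : (-1:ℝ)^n * ((den x₀ (n+1) : ℝ) * B x₀ n + (den x₀ n : ℝ) * B x₀ (n+1)) = (-1:ℝ)^n := by
    have expand : (den x₀ (n+1) : ℝ) * ((den x₀ n : ℝ) * x₀ - (num x₀ n : ℝ))
        - (den x₀ n : ℝ) * ((den x₀ (n+1) : ℝ) * x₀ - (num x₀ (n+1) : ℝ))
        = (num x₀ (n+1) : ℝ) * (den x₀ n : ℝ) - (num x₀ n : ℝ) * (den x₀ (n+1) : ℝ) := by ring
    rw [h1, h2] at expand
    rw [hdet] at expand
    rw [pow_succ] at expand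
    nlinarith [expand]
  have hpow : ((-1:ℝ)^n) ≠ 0 := by positivity
  exact mul_left_cancel₀ hpow (key.trans (mul_one _).symm)

end Stmt17Aux

open Stmt17Aux in
theorem stmt17 (x₀ : ℝ) (hx : x₀ ∈ Set.Ioo (0:ℝ) 1) (hirr : Irrational x₀)
    (n : ℕ) (hn : 1 ≤ n) :
    theta x₀ (n + 1) =
      theta x₀ (n - 1) +
        (⌊(1 + Real.sqrt (1 - 4 * theta x₀ (n - 1) * theta x₀ n)) / (2 * theta x₀ n)⌋ : ℝ) *
          Real.sqrt (1 - 4 * theta x₀ (n - 1) * theta x₀ n) -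
        (⌊(1 + Real.sqrt (1 - 4 * theta x₀ (n - 1) * theta x₀ n)) / (2 * theta x₀ n)⌋ : ℝ) ^ 2 *
          theta x₀ n := by
  obtain ⟨m, rfl⟩ : ∃ m, n = m + 1 := ⟨n - 1, (Nat.succ_pred_eq_of_pos hn).symm⟩
  simp only [Nat.add_sub_cancel]
  have hq0 : (1:ℝ) ≤ (den x₀ m : ℝ) := by exact_mod_cast den_ge_one x₀ hx hirr m
  have hq1 : (1:ℝ) ≤ (den x₀ (m+1) : ℝ) := by exact_mod_cast den_ge_one x₀ hx hirr (m+1)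
  have hq01 : (den x₀ m : ℝ) ≤ (den x₀ (m+1) : ℝ) := by exact_mod_cast den_mono x₀ hx hirr m
  set a : ℤ := digit x₀ (m + 2) with ha
  set q0 : ℝ := (den x₀ m : ℝ)
  set q1 : ℝ := (den x₀ (m+1) : ℝ)
  set b0 : ℝ := B x₀ m
  set b1 : ℝ := B x₀ (m+1)
  set b2 : ℝ := B x₀ (m+2)
  have hb0 : 0 < b0 := B_pos x₀ hx hirr m
  have hb1 : 0 < b1 := B_pos x₀ hx hirr (m+1)
  have hb2 : 0 < b2 := B_pos x₀ hx hirr (m+2)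
  have hb10 : b1 < b0 := B_lt x₀ hx hirr m
  have hb21 : b2 < b1 := B_lt x₀ hx hirr (m+1)
  have hrec : b2 = b0 - (a:ℝ) * b1 := B_rec x₀ hx hirr m
  have hone : q1 * b0 + q0 * b1 = 1 := one_eq x₀ hx hirr m
  have ht0 : theta x₀ m = q0 * b0 := theta_eq x₀ hx hirr m
  have ht1 : theta x₀ (m+1) = q1 * b1 := theta_eq x₀ hx hirr (m+1)
  have ht2 : theta x₀ (m+1+1) = (den x₀ (m+2) : ℝ) * b2 := theta_eq x₀ hx hirr (m+2)
  have hq2 : (den x₀ (m+2) : ℝ) = (a:ℝ) * q1 + q0 := by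
    rw [show den x₀ (m+2) = digit x₀ (m+2) * den x₀ (m+1) + den x₀ m from rfl]
    push_cast; ring
  set s : ℝ := q1 * b0 - q0 * b1 with hs
  have hspos : 0 < s := by nlinarith
  have hsq : 1 - 4 * theta x₀ m * theta x₀ (m+1) = s ^ 2 := by
    rw [ht0, ht1]; nlinarith [hone]
  have hsqrt : Real.sqrt (1 - 4 * theta x₀ m * theta x₀ (m+1)) = s := by
    rw [hsq, Real.sqrt_sq hspos.le]
  have hdivb : (1 + s) / (2 * theta x₀ (m+1)) = b0 / b1 := by
    rw [ht1]
    have h1 : 1 + s = 2 * q1 * b0 := by rw [hs]; linarith [hone]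
    rw [h1]
    rw [div_eq_div_iff (by positivity) (by positivity)]
    ring
  have hfloor : ⌊(1 + s) / (2 * theta x₀ (m+1))⌋ = a := by
    rw [hdivb]
    rw [Int.floor_eq_iff]
    constructor
    · rw [le_div_iff₀ hb1]; nlinarith [hrec]
    · rw [div_lt_iff₀ hb1]; push_cast; nlinarith [hrec]
  rw [hsqrt, hfloor, ht2, hq2, hrec, ht0, ht1, hs]
  ring
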